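/- Let X ∈ ℂ^{N×M}, let U_k be the N×N shift matrices, and let h_p = (1, e^{jω_p}, …, e^{jω_p(N−1)})ᵀ with ω_p = 2π(p−1)/(2N) for p = 1,…,2N. Then Σ_{k=1−N}^{N−1} ‖X^H U_k X‖_F² = (1/(2N)) Σ_{p=1}^{2N} ‖X^H h_p‖₂⁴. -/

import Mathlib

open Matrix Complex

private lemma orth (N : ℕ) (hN : 0 < N) (s : ℤ) (hs : s.natAbs < 2*N) :
    ∑ p : Fin (2*N), Complex.exp (Complex.I * (2 * (Real.pi:ℝ) * (p:ℕ) / (2*(N:ℕ))) * s)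
      = if s = 0 then ((2*N : ℕ) : ℂ) else 0 := by
  rcases eq_or_ne s 0 with rfl | h
  · simp
  · rw [if_neg h]
    have hNe : ((2*N : ℕ) : ℂ) ≠ 0 := by simp; omega
    set z : ℂ := Complex.exp ((Real.pi * s / N : ℝ) * Complex.I) with hz
    have key : ∀ p : Fin (2*N), Complex.exp (Complex.I * (2 * (Real.pi:ℝ) * (p:ℕ) / (2*(N:ℕ))) * s) = z ^ (p:ℕ) := by
      intro p
      rw [hz, ← Complex.exp_nat_mul]
      congr 1
      push_cast
      have : (N:ℂ) ≠ 0 := by simp; omega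
      field_simp
    rw [Finset.sum_congr rfl (fun p _ => key p), Fin.sum_univ_eq_sum_range (fun i => z ^ i)]
    have hz2N : z ^ (2*N) = 1 := by
      rw [← Complex.exp_nat_mul]
      have : ((2*N : ℕ) : ℂ) * ((Real.pi * s / N : ℝ) * Complex.I) = (s:ℤ) * (2 * Real.pi * Complex.I) := by
        push_cast
        have : (N:ℂ) ≠ 0 := by simp; omega
        field_simp
      rw [this, Complex.exp_int_mul_two_pi_mul_I]
    have hz1 : z ≠ 1 := by
      intro hz1
      rw [hz, Complex.exp_eq_one_iff] at hz1
      obtain ⟨n, hn⟩ := hz1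
      have him := congrArg Complex.im hn
      simp [Complex.ofReal_mul] at him
      have hs' : (s : ℝ) = n * (2 * N) := by
        have hπ := Real.pi_ne_zero
        have hN' : (N:ℝ) ≠ 0 := by simp; omega
        field_simp at him
        have := mul_left_cancel₀ hπ (by rw [him]; ring : Real.pi * (s:ℝ) = Real.pi * (n*(2*(N:ℝ))))
        linarith
      have heq : s = n * (2*N) := by exact_mod_cast hs'
      have hn0 : n ≠ 0 := by rintro rfl; simp at heq; omega
      have : s.natAbs = n.natAbs * (2*N) := by
        rw [heq, Int.natAbs_mul]
        have : ((2:ℤ)*N).natAbs = 2*N := by omega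
        rw [this]
      have h1 : 1 ≤ n.natAbs := by omega
      nlinarith [this, h1, hs]
    rw [geom_sum_eq hz1, hz2N]
    simp

theorem frobenius_corr_sum_eq_fourth_moment (M N : ℕ) (hN : 0 < N)
    (X : Matrix (Fin N) (Fin M) ℂ)
    (U : ℤ → Matrix (Fin N) (Fin N) ℂ)
    (hU : ∀ (k : ℤ) (i j : Fin N), U k i j = if (j : ℤ) - (i : ℤ) = k then 1 else 0)
    (h : Fin (2 * N) → Fin N → ℂ)
    (hh : ∀ (p : Fin (2 * N)) (n : Fin N),
      h p n = Complex.exp (Complex.I * (2 * Real.pi * (p : ℕ) / (2 * N)) * (n : ℕ))) :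
    ∑ k ∈ Finset.Icc (1 - (N : ℤ)) ((N : ℤ) - 1),
        (∑ i : Fin M, ∑ j : Fin M, ‖(Xᴴ * U k * X) i j‖ ^ 2) =
      (1 / (2 * N) : ℝ) *
        ∑ p : Fin (2 * N), (∑ m : Fin M, ‖(Xᴴ *ᵥ h p) m‖ ^ 2) ^ 2 := by
  classical
  have h2N : ((2*N : ℕ) : ℂ) ≠ 0 := by simp; omega
  -- reduce to ℂ
  rw [← Complex.ofReal_inj]
  simp only [Complex.sq_norm]
  push_cast
  simp only [← Complex.mul_conj]
  have entry : ∀ (k : ℤ) (i j : Fin M), (Xᴴ * U k * X) i j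
      = ∑ a : Fin N, ∑ b : Fin N,
          if ((b:ℤ) - (a:ℤ) = k) then (starRingEnd ℂ) (X a i) * X b j else 0 := by
    intro k i j
    simp only [Matrix.mul_apply, Matrix.conjTranspose_apply, hU, Finset.sum_mul, mul_ite,
      ite_mul, mul_one, one_mul, mul_zero, zero_mul]
    exact Finset.sum_comm
  have sumk : ∀ (a b a' b' : Fin N) (f g : ℂ),
      (∑ k ∈ Finset.Icc (1 - (N:ℤ)) ((N:ℤ) - 1),
        (if ((b:ℤ) - (a:ℤ) = k) then f else 0) * (if ((b':ℤ) - (a':ℤ) = k) then g else 0))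
      = if ((b':ℤ) - (a':ℤ) = (b:ℤ) - (a:ℤ)) then f * g else 0 := by
    intro a b a' b' f g
    rw [Finset.sum_eq_single ((b:ℤ) - (a:ℤ))]
    · simp
    · intro k hk hne
      rw [if_neg (fun hc => hne hc.symm), zero_mul]
    · intro hmem
      exfalso
      apply hmem
      rw [Finset.mem_Icc]
      have ha := a.isLt
      have hb := b.isLt
      omega
  have hL : (∑ k ∈ Finset.Icc (1 - (N:ℤ)) ((N:ℤ) - 1), ∑ i : Fin M, ∑ j : Fin M,
        (Xᴴ * U k * X) i j * (starRingEnd ℂ) ((Xᴴ * U k * X) i j))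
      = ∑ n1 : Fin N, ∑ n2 : Fin N, ∑ n3 : Fin N, ∑ n4 : Fin N,
          if ((n1:ℤ) - (n2:ℤ) + (n3:ℤ) - (n4:ℤ) = 0)
          then (∑ m : Fin M, (starRingEnd ℂ) (X n1 m) * X n2 m) *
               (∑ m : Fin M, (starRingEnd ℂ) (X n3 m) * X n4 m)
          else 0 := by
    have e1 : ∀ (k : ℤ) (i j : Fin M),
        (Xᴴ * U k * X) i j * (starRingEnd ℂ) ((Xᴴ * U k * X) i j)
        = ∑ a : Fin N, ∑ a' : Fin N, ∑ b : Fin N, ∑ b' : Fin N,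
            (if ((b:ℤ) - (a:ℤ) = k) then (starRingEnd ℂ) (X a i) * X b j else 0) *
            (if ((b':ℤ) - (a':ℤ) = k) then X a' i * (starRingEnd ℂ) (X b' j) else 0) := by
      intro k i j
      rw [entry k i j]
      simp only [map_sum, apply_ite (starRingEnd ℂ), _root_.map_mul, map_zero, Complex.conj_conj]
      rw [Finset.sum_mul_sum]
      exact Finset.sum_congr rfl fun a _ => Finset.sum_congr rfl fun a' _ => Finset.sum_mul_sum _ _ _ _
    simp only [e1]
    -- move k innermost
    rw [Finset.sum_comm]
    conv_lhs => enter [2, i]; rw [Finset.sum_comm]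
    conv_lhs => enter [2, i, 2, j]; rw [Finset.sum_comm]
    conv_lhs => enter [2, i, 2, j, 2, a]; rw [Finset.sum_comm]
    conv_lhs => enter [2, i, 2, j, 2, a, 2, a2]; rw [Finset.sum_comm]
    conv_lhs => enter [2, i, 2, j, 2, a, 2, a2, 2, b]; rw [Finset.sum_comm]
    simp only [sumk]
    -- move i innermost
    rw [Finset.sum_comm]
    conv_lhs => enter [2, j]; rw [Finset.sum_comm]
    conv_lhs => enter [2, j, 2, a]; rw [Finset.sum_comm]
    conv_lhs => enter [2, j, 2, a, 2, a2]; rw [Finset.sum_comm]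
    conv_lhs => enter [2, j, 2, a, 2, a2, 2, b]; rw [Finset.sum_comm]
    -- move j innermost (above i)
    rw [Finset.sum_comm]
    conv_lhs => enter [2, a]; rw [Finset.sum_comm]
    conv_lhs => enter [2, a, 2, a2]; rw [Finset.sum_comm]
    conv_lhs => enter [2, a, 2, a2, 2, b]; rw [Finset.sum_comm]
    -- now : ∑ a, ∑ a2, ∑ b, ∑ b2, ∑ j, ∑ i, ite ...
    have eval : ∀ a a' b b' : Fin N,
        (∑ j : Fin M, ∑ i : Fin M,
          if ((b':ℤ) - (a':ℤ) = (b:ℤ) - (a:ℤ))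
          then ((starRingEnd ℂ) (X a i) * X b j) * (X a' i * (starRingEnd ℂ) (X b' j))
          else 0)
        = if ((a:ℤ) - (a':ℤ) + (b':ℤ) - (b:ℤ) = 0)
          then (∑ m : Fin M, (starRingEnd ℂ) (X a m) * X a' m) *
               (∑ m : Fin M, (starRingEnd ℂ) (X b' m) * X b m)
          else 0 := by
      intro a a' b b'
      have hiff : (((b':ℤ) - (a':ℤ) = (b:ℤ) - (a:ℤ))) ↔ ((a:ℤ) - (a':ℤ) + (b':ℤ) - (b:ℤ) = 0) := by
        omega
      by_cases hc : ((a:ℤ) - (a':ℤ) + (b':ℤ) - (b:ℤ) = 0)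
      · simp only [hiff, if_pos hc]
        rw [mul_comm, Finset.sum_mul_sum]
        exact Finset.sum_congr rfl fun j _ => Finset.sum_congr rfl fun i _ => by ring
      · simp only [hiff, if_neg hc, Finset.sum_const_zero]
    simp only [eval]
    -- swap last two
    conv_lhs => enter [2, a, 2, a2]; rw [Finset.sum_comm]
  have mv : ∀ (p : Fin (2*N)) (m : Fin M),
      (Xᴴ *ᵥ h p) m = ∑ n : Fin N, (starRingEnd ℂ) (X n m) * h p n := by
    intro p m
    simp [Matrix.mulVec, dotProduct, Matrix.conjTranspose_apply]
  have hexp : ∀ (p : Fin (2*N)) (n1 n2 n3 n4 : Fin N),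
      (h p n1 * (starRingEnd ℂ) (h p n2)) * (h p n3 * (starRingEnd ℂ) (h p n4))
      = Complex.exp (Complex.I * (2 * (Real.pi:ℝ) * (p:ℕ) / (2*(N:ℕ)))
          * ((((n1:ℤ) - (n2:ℤ) + (n3:ℤ) - (n4:ℤ)) : ℤ) : ℂ)) := by
    intro p n1 n2 n3 n4
    simp only [hh, ← Complex.exp_conj, ← Complex.exp_add]
    congr 1
    simp only [_root_.map_mul, map_div₀, Complex.conj_I, map_ofNat, Complex.conj_ofReal, map_natCast]
    push_cast
    ring
  have sump : ∀ (n1 n2 n3 n4 : Fin N),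
      (∑ p : Fin (2*N), (h p n1 * (starRingEnd ℂ) (h p n2)) * (h p n3 * (starRingEnd ℂ) (h p n4)))
      = if ((n1:ℤ) - (n2:ℤ) + (n3:ℤ) - (n4:ℤ) = 0) then ((2*N : ℕ) : ℂ) else 0 := by
    intro n1 n2 n3 n4
    rw [Finset.sum_congr rfl fun p _ => hexp p n1 n2 n3 n4]
    refine orth N hN _ ?_
    have h1 := n1.isLt
    have h2 := n2.isLt
    have h3 := n3.isLt
    have h4 := n4.isLt
    omega
  have hR : (∑ p : Fin (2*N), (∑ m : Fin M,
        (Xᴴ *ᵥ h p) m * (starRingEnd ℂ) ((Xᴴ *ᵥ h p) m)) ^ 2)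
      = ((2*N : ℕ) : ℂ) * ∑ n1 : Fin N, ∑ n2 : Fin N, ∑ n3 : Fin N, ∑ n4 : Fin N,
          if ((n1:ℤ) - (n2:ℤ) + (n3:ℤ) - (n4:ℤ) = 0)
          then (∑ m : Fin M, (starRingEnd ℂ) (X n1 m) * X n2 m) *
               (∑ m : Fin M, (starRingEnd ℂ) (X n3 m) * X n4 m)
          else 0 := by
    have inner : ∀ p : Fin (2*N),
        (∑ m : Fin M, (Xᴴ *ᵥ h p) m * (starRingEnd ℂ) ((Xᴴ *ᵥ h p) m))
        = ∑ n : Fin N, ∑ n' : Fin N,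
            (∑ m : Fin M, (starRingEnd ℂ) (X n m) * X n' m) * (h p n * (starRingEnd ℂ) (h p n')) := by
      intro p
      simp only [mv, map_sum, _root_.map_mul, Complex.conj_conj]
      simp only [Finset.sum_mul_sum]
      rw [Finset.sum_comm]
      conv_lhs => enter [2, n]; rw [Finset.sum_comm]
      refine Finset.sum_congr rfl fun n _ => Finset.sum_congr rfl fun n' _ => ?_
      rw [Finset.sum_mul]
      exact Finset.sum_congr rfl fun m _ => by ring
    simp only [inner]
    simp only [sq, Finset.sum_mul_sum]
    -- order : p, n1, n3, n2, n4 → p, n1, n2, n3, n4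
    conv_lhs => enter [2, p, 2, n1]; rw [Finset.sum_comm]
    -- move p innermost
    rw [Finset.sum_comm]
    conv_lhs => enter [2, n1]; rw [Finset.sum_comm]
    conv_lhs => enter [2, n1, 2, n2]; rw [Finset.sum_comm]
    conv_lhs => enter [2, n1, 2, n2, 2, n3]; rw [Finset.sum_comm]
    have pull : ∀ (c d : ℂ) (e1 e2 : Fin (2*N) → ℂ),
        (∑ p : Fin (2*N), (c * e1 p) * (d * e2 p)) = (c * d) * ∑ p : Fin (2*N), e1 p * e2 p := by
      intro c d e1 e2
      rw [Finset.mul_sum]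
      exact Finset.sum_congr rfl fun p _ => by ring
    simp only [pull]
    simp only [sump]
    conv_rhs => rw [Finset.mul_sum]
    refine Finset.sum_congr rfl fun n1 _ => ?_
    conv_rhs => rw [Finset.mul_sum]
    refine Finset.sum_congr rfl fun n2 _ => ?_
    conv_rhs => rw [Finset.mul_sum]
    refine Finset.sum_congr rfl fun n3 _ => ?_
    conv_rhs => rw [Finset.mul_sum]
    refine Finset.sum_congr rfl fun n4 _ => ?_
    by_cases hc : ((n1:ℤ) - (n2:ℤ) + (n3:ℤ) - (n4:ℤ) = 0)
    · simp only [if_pos hc]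
      rw [mul_comm]
      congr 1
      rw [Finset.sum_mul_sum]
    · simp only [if_neg hc, mul_zero]
  rw [hL, hR]
  have h2N' : (2 * (N:ℂ)) ≠ 0 := by
    simpa using h2N
  push_cast
  rw [← mul_assoc, one_div, inv_mul_cancel₀ h2N', one_mul]
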